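/- arXiv:1602.05414 — 2 statements merged into one kernel-verified Lean document; each statement's English description precedes it below -/
import Mathlib

section
/- For the logarithmic mean θ(s,t) = ∫₀¹ s^α t^(1-α) dα and all positive reals s, t, u, v, we have u·∂₁θ(s,t) + v·∂₂θ(s,t) ≥ θ(u,v). -/
open MeasureTheory intervalIntegral Set Metric Real

noncomputable def logMean (s t : ℝ) : ℝ := ∫ a in (0:ℝ)..1, s ^ a * t ^ (1 - a)

noncomputable def d1θ (s t : ℝ) : ℝ := deriv (fun u => logMean u t) s

noncomputable def d2θ (s t : ℝ) : ℝ := deriv (fun v => logMean s v) t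

lemma contRpow {x : ℝ} (hx : 0 < x) : Continuous fun a : ℝ => x ^ a := by
  have : (fun a : ℝ => x ^ a) = fun a => Real.exp (Real.log x * a) :=
    funext fun a => Real.rpow_def_of_pos hx a
  rw [this]
  exact Real.continuous_exp.comp (continuous_const.mul continuous_id)

lemma rpow_le_max {x : ℝ} (hx : 0 < x) {c d e : ℝ} (h1 : c ≤ e) (h2 : e ≤ d) :
    x ^ e ≤ max (x ^ c) (x ^ d) := by
  rcases le_total 1 x with h | h
  · exact le_max_of_le_right (Real.rpow_le_rpow_of_exponent_le h h2)
  · exact le_max_of_le_left (Real.rpow_le_rpow_of_exponent_ge hx h h1)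

lemma hasDeriv_fst (s t : ℝ) (hs : 0 < s) (ht : 0 < t) :
    HasDerivAt (fun x => logMean x t)
      (∫ a in (0:ℝ)..1, a * s ^ (a - 1) * t ^ (1 - a)) s := by
  have hcont : ∀ x : ℝ, 0 < x →
      Continuous fun a : ℝ => x ^ a * t ^ (1 - a) := fun x hx =>
    (contRpow hx).mul ((contRpow ht).comp (continuous_const.sub continuous_id))
  have hball : ∀ x ∈ ball s (s / 2), s / 2 < x ∧ x < 3 * s / 2 := by
    intro x hx
    rw [mem_ball, Real.dist_eq, abs_lt] at hx
    constructor <;> linarith [hx.1, hx.2]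
  have h := intervalIntegral.hasDerivAt_integral_of_dominated_loc_of_deriv_le
    (F := fun x a => x ^ a * t ^ (1 - a))
    (F' := fun x a => a * x ^ (a - 1) * t ^ (1 - a))
    (x₀ := s) (a := (0:ℝ)) (b := 1) (μ := volume)
    (bound := fun _ => max ((s / 2)⁻¹) 1 * max 1 t)
    (s := ball s (s / 2)) (ball_mem_nhds s (half_pos hs)) ?_ ?_ ?_ ?_ ?_ ?_
  · exact h.2
  · filter_upwards [ball_mem_nhds s (half_pos hs)] with x hx
    exact ((hcont x (lt_trans (half_pos hs) (hball x hx).1)).aestronglyMeasurable).restrict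
  · exact (hcont s hs).intervalIntegrable 0 1
  · have : Continuous fun a : ℝ => a * s ^ (a - 1) * t ^ (1 - a) := by
      exact ((continuous_id.mul ((contRpow hs).comp (continuous_id.sub continuous_const))).mul
        ((contRpow ht).comp (continuous_const.sub continuous_id)))
    exact this.aestronglyMeasurable.restrict
  · refine Filter.Eventually.of_forall fun a ha x hx => ?_
    obtain ⟨hx1, hx2⟩ := hball x hx
    have hxpos : 0 < x := lt_trans (half_pos hs) hx1
    rw [Set.uIoc_of_le (by norm_num : (0:ℝ) ≤ 1)] at ha
    have ha0 : 0 < a := ha.1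
    have ha1 : a ≤ 1 := ha.2
    have hb1 : x ^ (a - 1) ≤ max ((s / 2)⁻¹) 1 := by
      have := rpow_le_max hxpos (c := -1) (d := 0) (e := a - 1) (by linarith) (by linarith)
      refine this.trans ?_
      rw [Real.rpow_neg_one, Real.rpow_zero]
      exact max_le_max (by
        rw [inv_le_inv₀ hxpos (half_pos hs)]
        exact hx1.le) le_rfl
    have hb2 : t ^ (1 - a) ≤ max 1 t := by
      have := rpow_le_max ht (c := 0) (d := 1) (e := 1 - a) (by linarith) (by linarith)
      simpa [Real.rpow_zero, Real.rpow_one] using this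
    have h1 : ‖a * x ^ (a - 1) * t ^ (1 - a)‖ = a * x ^ (a - 1) * t ^ (1 - a) := by
      rw [Real.norm_eq_abs, abs_of_nonneg]
      positivity
    rw [h1]
    have : a * x ^ (a - 1) ≤ 1 * max ((s / 2)⁻¹) 1 :=
      mul_le_mul ha1 hb1 (Real.rpow_nonneg hxpos.le _) zero_le_one
    calc a * x ^ (a - 1) * t ^ (1 - a) ≤ (1 * max ((s / 2)⁻¹) 1) * max 1 t :=
          mul_le_mul this hb2 (Real.rpow_nonneg ht.le _)
            (by positivity)
      _ = max ((s / 2)⁻¹) 1 * max 1 t := by ring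
  · exact intervalIntegrable_const
  · refine Filter.Eventually.of_forall fun a _ x hx => ?_
    have hxpos : 0 < x := lt_trans (half_pos hs) (hball x hx).1
    have := (Real.hasDerivAt_rpow_const (p := a) (Or.inl hxpos.ne')).mul_const (t ^ (1 - a))
    simpa [mul_assoc] using this

lemma logMean_comm (s t : ℝ) : logMean s t = logMean t s := by
  unfold logMean
  have := intervalIntegral.integral_comp_sub_left (a := (0:ℝ)) (b := 1)
    (fun a => t ^ a * s ^ (1 - a)) 1
  simp only [sub_zero, sub_self, sub_sub_cancel] at this
  rw [← this]
  exact intervalIntegral.integral_congr fun x _ => mul_comm _ _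

/-- For all positive reals `s, t, u, v`, `u·∂₁θ(s,t) + v·∂₂θ(s,t) ≥ θ(u,v)`. -/
theorem logMean_deriv_inequality (s t u v : ℝ) (hs : 0 < s) (ht : 0 < t)
    (hu : 0 < u) (hv : 0 < v) :
    u * d1θ s t + v * d2θ s t ≥ logMean u v := by
  have hd1 : d1θ s t = ∫ a in (0:ℝ)..1, a * s ^ (a - 1) * t ^ (1 - a) :=
    (hasDeriv_fst s t hs ht).deriv
  have hd2 : d2θ s t = ∫ a in (0:ℝ)..1, a * t ^ (a - 1) * s ^ (1 - a) := by
    unfold d2θ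
    have : (fun w => logMean s w) = fun w => logMean w s := funext fun w => logMean_comm s w
    rw [this]
    exact (hasDeriv_fst t s ht hs).deriv
  -- substitute a ↦ 1 - a in the second integral
  have hsub : (∫ a in (0:ℝ)..1, a * t ^ (a - 1) * s ^ (1 - a))
      = ∫ a in (0:ℝ)..1, (1 - a) * t ^ (-a) * s ^ a := by
    have := intervalIntegral.integral_comp_sub_left (a := (0:ℝ)) (b := 1)
      (fun a => a * t ^ (a - 1) * s ^ (1 - a)) 1
    simp only [sub_zero, sub_self, sub_sub_cancel] at this
    rw [← this]
    refine intervalIntegral.integral_congr fun x _ => ?_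
    rw [show (1:ℝ) - x - 1 = -x by ring]
  rw [hd1, hd2, hsub]
  have hc1 : Continuous fun a : ℝ => a * s ^ (a - 1) * t ^ (1 - a) :=
    (continuous_id.mul ((contRpow hs).comp (continuous_id.sub continuous_const))).mul
      ((contRpow ht).comp (continuous_const.sub continuous_id))
  have hc2 : Continuous fun a : ℝ => (1 - a) * t ^ (-a) * s ^ a :=
    ((continuous_const.sub continuous_id).mul
      ((contRpow ht).comp continuous_neg)).mul (contRpow hs)
  have hcuv : Continuous fun a : ℝ => u ^ a * v ^ (1 - a) :=
    (contRpow hu).mul ((contRpow hv).comp (continuous_const.sub continuous_id))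
  rw [← intervalIntegral.integral_const_mul, ← intervalIntegral.integral_const_mul,
    ← intervalIntegral.integral_add (f := fun a => u * (a * s ^ (a - 1) * t ^ (1 - a)))
        (g := fun a => v * ((1 - a) * t ^ (-a) * s ^ a))
      ((continuous_const.mul hc1).intervalIntegrable 0 1) ((continuous_const.mul hc2).intervalIntegrable 0 1)]
  unfold logMean
  refine intervalIntegral.integral_mono_on (by norm_num) (hcuv.intervalIntegrable 0 1)
    (((continuous_const.mul hc1).add (continuous_const.mul hc2)).intervalIntegrable 0 1) fun a ha => ?_
  obtain ⟨ha0, ha1⟩ := ha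
  have hsa : (0:ℝ) < s ^ a := Real.rpow_pos_of_pos hs a
  have hta : (0:ℝ) < t ^ (1 - a) := Real.rpow_pos_of_pos ht (1 - a)
  have key : (u / s) ^ a * (v / t) ^ (1 - a) ≤ a * (u / s) + (1 - a) * (v / t) :=
    Real.geom_mean_le_arith_mean2_weighted ha0 (by linarith) (by positivity) (by positivity)
      (by ring)
  calc u ^ a * v ^ (1 - a)
      = ((u / s) ^ a * (v / t) ^ (1 - a)) * (s ^ a * t ^ (1 - a)) := by
        rw [Real.div_rpow hu.le hs.le, Real.div_rpow hv.le ht.le]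
        field_simp
    _ ≤ (a * (u / s) + (1 - a) * (v / t)) * (s ^ a * t ^ (1 - a)) :=
        mul_le_mul_of_nonneg_right key (by positivity)
    _ = u * (a * s ^ (a - 1) * t ^ (1 - a)) + v * ((1 - a) * t ^ (-a) * s ^ a) := by
        have e1 : s ^ (a - 1) = s ^ a / s := by
          rw [Real.rpow_sub hs, Real.rpow_one]
        have e2 : t ^ (-a) = t ^ (1 - a) / t := by
          rw [show (-a) = (1 - a) - 1 by ring, Real.rpow_sub ht, Real.rpow_one]
        rw [e1, e2]
        field_simp
end

section
/- For any ψ: X → ℝ, ρ: X → ℝ₊ and any x ∈ X, δ, η ∈ G in a mapping representation, the pointwise off-diagonal estimate B(x,δ,η) + B(x,η,δ) ≥ −B(δx, δ⁻¹, δ⁻¹) − B(ηx, η⁻¹, η⁻¹) holds. -/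
section helpers
open Real intervalIntegral MeasureTheory

lemma cont_rpow_exp {s : ℝ} (hs : 0 < s) : Continuous fun a : ℝ => s ^ a := by
  have : (fun a : ℝ => s ^ a) = fun a => Real.exp (Real.log s * a) :=
    funext fun a => Real.rpow_def_of_pos hs a
  rw [this]; fun_prop

lemma cont_integrand {s t : ℝ} (hs : 0 < s) (ht : 0 < t) :
    Continuous fun a : ℝ => s ^ a * t ^ (1 - a) := by
  exact (cont_rpow_exp hs).mul ((cont_rpow_exp ht).comp (by fun_prop))

lemma cont_dintegrand {s t : ℝ} (hs : 0 < s) (ht : 0 < t) :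
    Continuous fun a : ℝ => a * s ^ (a - 1) * t ^ (1 - a) := by
  exact (continuous_id.mul ((cont_rpow_exp hs).comp (by fun_prop))).mul
    ((cont_rpow_exp ht).comp (by fun_prop))

lemma hasDerivAt_logMean {s t : ℝ} (hs : 0 < s) (ht : 0 < t) :
    HasDerivAt (fun u => logMean u t)
      (∫ a in (0:ℝ)..1, a * s ^ (a - 1) * t ^ (1 - a)) s := by
  have hε : (0:ℝ) < s / 2 := by linarith
  have key := intervalIntegral.hasDerivAt_integral_of_dominated_loc_of_deriv_le
    (F := fun u a => u ^ a * t ^ (1 - a))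
    (F' := fun u a => a * u ^ (a - 1) * t ^ (1 - a))
    (x₀ := s) (a := (0:ℝ)) (b := 1) (μ := MeasureTheory.volume)
    (bound := fun _ => 1 * max ((s/2) ^ (-1:ℝ)) 1 * max t 1)
    (Metric.ball_mem_nhds s hε) ?_ ?_ ?_ ?_ ?_ ?_
  · exact key.2
  · -- measurability of F u, eventually in u
    filter_upwards [eventually_gt_nhds hs] with u hu using
      (cont_integrand hu ht).aestronglyMeasurable
  · exact (cont_integrand hs ht).intervalIntegrable 0 1
  · exact (cont_dintegrand hs ht).aestronglyMeasurable
  · -- bound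
    refine Filter.Eventually.of_forall fun a ha => fun u hu => ?_
    rw [Set.uIoc_of_le (by norm_num : (0:ℝ) ≤ 1)] at ha
    have hu2 : s / 2 < u := by
      have := abs_lt.1 (by simpa [Metric.mem_ball, Real.dist_eq] using hu)
      linarith [this.1]
    have hu0 : 0 < u := lt_trans hε hu2
    have h1 : u ^ (a - 1) ≤ max ((s/2) ^ (-1:ℝ)) 1 := by
      rcases le_or_gt 1 u with h | h
      · refine le_trans ?_ (le_max_right _ _)
        calc u ^ (a - 1) ≤ u ^ (0:ℝ) :=
              Real.rpow_le_rpow_of_exponent_le h (by linarith [ha.2])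
          _ = 1 := Real.rpow_zero u
      · refine le_trans ?_ (le_max_left _ _)
        calc u ^ (a - 1) ≤ u ^ (-1:ℝ) :=
              Real.rpow_le_rpow_of_exponent_ge hu0 h.le (by linarith [ha.1])
          _ ≤ (s/2) ^ (-1:ℝ) := by
              rw [Real.rpow_neg_one, Real.rpow_neg_one]
              exact inv_anti₀ hε hu2.le
    have h2 : t ^ (1 - a) ≤ max t 1 := by
      rcases le_or_gt 1 t with h | h
      · refine le_trans ?_ (le_max_left _ _)
        calc t ^ (1 - a) ≤ t ^ (1:ℝ) :=
              Real.rpow_le_rpow_of_exponent_le h (by linarith [ha.1])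
          _ = t := Real.rpow_one t
      · refine le_trans ?_ (le_max_right _ _)
        calc t ^ (1 - a) ≤ t ^ (0:ℝ) :=
              Real.rpow_le_rpow_of_exponent_ge ht h.le (by linarith [ha.2])
          _ = 1 := Real.rpow_zero t
    have ha1 : |a| ≤ 1 := by rw [abs_of_pos ha.1]; exact ha.2
    simp only [norm_mul, Real.norm_eq_abs,
      abs_of_nonneg (Real.rpow_nonneg hu0.le (a-1)),
      abs_of_nonneg (Real.rpow_nonneg ht.le (1-a))]
    have hm1 : (0:ℝ) ≤ max ((s/2) ^ (-1:ℝ)) 1 := le_max_of_le_right zero_le_one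
    have hm2 : (0:ℝ) ≤ max t 1 := le_max_of_le_right zero_le_one
    exact mul_le_mul (mul_le_mul ha1 h1 (Real.rpow_nonneg hu0.le _) (by linarith))
      h2 (Real.rpow_nonneg ht.le _) (by positivity)
  · exact intervalIntegrable_const
  · refine Filter.Eventually.of_forall fun a ha => fun u hu => ?_
    have hu2 : s / 2 < u := by
      have := abs_lt.1 (by simpa [Metric.mem_ball, Real.dist_eq] using hu)
      linarith [this.1]
    have hu0 : 0 < u := lt_trans hε hu2
    exact (Real.hasDerivAt_rpow_const (Or.inl hu0.ne')).mul_const _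

lemma d1θ_eq {s t : ℝ} (hs : 0 < s) (ht : 0 < t) :
    d1θ s t = ∫ a in (0:ℝ)..1, a * s ^ (a - 1) * t ^ (1 - a) :=
  (hasDerivAt_logMean hs ht).deriv

lemma d1θ_nonneg {s t : ℝ} (hs : 0 < s) (ht : 0 < t) : 0 ≤ d1θ s t := by
  rw [d1θ_eq hs ht]
  apply intervalIntegral.integral_nonneg (by norm_num)
  intro a ha
  have := ha.1
  positivity

lemma logMean_nonneg {s t : ℝ} (hs : 0 < s) (ht : 0 < t) : 0 ≤ logMean s t := by
  apply intervalIntegral.integral_nonneg (by norm_num)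
  intro a _
  positivity

lemma logMean_symm {s t : ℝ} : logMean s t = logMean t s := by
  unfold logMean
  have := intervalIntegral.integral_comp_sub_left
    (fun a : ℝ => t ^ a * s ^ (1 - a)) (1:ℝ) (a := 0) (b := 1)
  simp only [sub_zero, sub_self] at this
  rw [← this]
  congr 1
  funext a
  rw [sub_sub_cancel, mul_comm]

lemma d1θ_swap_eq {s t : ℝ} (hs : 0 < s) (ht : 0 < t) :
    d1θ t s = ∫ a in (0:ℝ)..1, (1 - a) * s ^ a * t ^ (-a) := by
  rw [d1θ_eq ht hs]
  have := intervalIntegral.integral_comp_sub_left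
    (fun a : ℝ => (1 - a) * s ^ a * t ^ (-a)) (1:ℝ) (a := 0) (b := 1)
  simp only [sub_zero, sub_self] at this
  rw [← this]
  congr 1
  funext a
  rw [sub_sub_cancel]
  ring_nf

lemma pointwise_tangent {a b c α : ℝ} (ha : 0 < a) (hb : 0 < b) (hc : 0 < c)
    (hα0 : 0 ≤ α) (hα1 : α ≤ 1) :
    c ^ α * a ^ (1 - α)
      ≤ a ^ α * b ^ (1 - α) + (α * a ^ (α - 1) * b ^ (1 - α)) * (c - a)
          + ((1 - α) * a ^ α * b ^ (-α)) * (a - b) := by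
  set X : ℝ := a ^ (α - 1) * b ^ (1 - α) * c with hX
  set Y : ℝ := a ^ (α + 1) * b ^ (-α) with hY
  have hXp : 0 ≤ X := by positivity
  have hYp : 0 ≤ Y := by positivity
  have amgm : X ^ α * Y ^ (1 - α) ≤ α * X + (1 - α) * Y :=
    Real.geom_mean_le_arith_mean2_weighted hα0 (by linarith) hXp hYp (by ring)
  have e1 : X ^ α * Y ^ (1 - α) = c ^ α * a ^ (1 - α) := by
    rw [hX, hY, Real.mul_rpow (by positivity) hc.le,
      Real.mul_rpow (by positivity) (by positivity),
      Real.mul_rpow (by positivity) (by positivity)]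
    rw [← Real.rpow_mul ha.le, ← Real.rpow_mul hb.le, ← Real.rpow_mul ha.le,
      ← Real.rpow_mul hb.le]
    rw [show a ^ ((α - 1) * α) * b ^ ((1 - α) * α) * c ^ α *
        (a ^ ((α + 1) * (1 - α)) * b ^ (-α * (1 - α)))
      = (a ^ ((α - 1) * α) * a ^ ((α + 1) * (1 - α))) *
        (b ^ ((1 - α) * α) * b ^ (-α * (1 - α))) * c ^ α by ring]
    rw [← Real.rpow_add ha, ← Real.rpow_add hb]
    rw [show (α - 1) * α + (α + 1) * (1 - α) = 1 - α by ring,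
      show (1 - α) * α + -α * (1 - α) = 0 by ring, Real.rpow_zero]
    ring
  have s1 : a ^ (α - 1) * a = a ^ α := by
    rw [← Real.rpow_add_one ha.ne']; ring_nf
  have s2 : a ^ α * a = a ^ (α + 1) := (Real.rpow_add_one ha.ne' α).symm
  have s3 : b ^ (-α) * b = b ^ (1 - α) := by
    rw [← Real.rpow_add_one hb.ne']; ring_nf
  have e2 : α * X + (1 - α) * Y
      = a ^ α * b ^ (1 - α) + (α * a ^ (α - 1) * b ^ (1 - α)) * (c - a)
          + ((1 - α) * a ^ α * b ^ (-α)) * (a - b) := by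
    rw [hX, hY]
    linear_combination (α * b ^ (1 - α)) * s1 + (-(1 - α) * b ^ (-α)) * s2
      + ((1 - α) * a ^ α) * s3
  linarith [e1 ▸ e2 ▸ amgm]

lemma tangent {a b c : ℝ} (ha : 0 < a) (hb : 0 < b) (hc : 0 < c) :
    logMean c a ≤ logMean a b + d1θ a b * (c - a) + d1θ b a * (a - b) := by
  rw [d1θ_eq ha hb, d1θ_swap_eq ha hb]
  unfold logMean
  have i1 : IntervalIntegrable (fun α : ℝ => a ^ α * b ^ (1 - α))
      MeasureTheory.volume 0 1 := (cont_integrand ha hb).intervalIntegrable 0 1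
  have c2 : Continuous fun α : ℝ => α * a ^ (α - 1) * b ^ (1 - α) * (c - a) :=
    (cont_dintegrand ha hb).mul continuous_const
  have c3 : Continuous fun α : ℝ => (1 - α) * a ^ α * b ^ (-α) * (a - b) :=
    (((continuous_const.sub continuous_id).mul (cont_rpow_exp ha)).mul
      ((cont_rpow_exp hb).comp continuous_neg)).mul continuous_const
  rw [← intervalIntegral.integral_mul_const, ← intervalIntegral.integral_mul_const,
    ← intervalIntegral.integral_add i1 (c2.intervalIntegrable 0 1),
    ← intervalIntegral.integral_add (i1.add (c2.intervalIntegrable 0 1))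
      (c3.intervalIntegrable 0 1)]
  apply intervalIntegral.integral_mono_on (by norm_num)
    ((cont_integrand hc ha).intervalIntegrable 0 1)
    (((i1.add (c2.intervalIntegrable 0 1))).add (c3.intervalIntegrable 0 1))
  intro α hα
  exact pointwise_tangent ha hb hc hα.1 hα.2

end helpers


/-- The pointwise `B`-term based at `y` with moves `α, γ`. -/
noncomputable def Bpt {X : Type*} (ρ ψ : X → ℝ) (y : X) (α γ : X → X) : ℝ :=
  (1/2) * (ψ (α y) - ψ y) ^ 2 * d1θ (ρ y) (ρ (α y)) * (ρ (γ y) - ρ y)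
    + (ψ (α y) - ψ y) * (ψ (γ y) - ψ y) * logMean (ρ y) (ρ (α y))

/-- The pointwise off-diagonal estimate
`B(x,δ,η) + B(x,η,δ) ≥ −B(δx,δ⁻¹,δ⁻¹) − B(ηx,η⁻¹,η⁻¹)`. -/
theorem B_offdiagonal_pointwise {X : Type*} (ρ ψ : X → ℝ) (hρ : ∀ y, 0 < ρ y)
    (δ η δ' η' : X → X) (x : X)
    (hδ : δ' (δ x) = x) (hη : η' (η x) = x) :
    Bpt ρ ψ x δ η + Bpt ρ ψ x η δ
      ≥ - Bpt ρ ψ (δ x) δ' δ' - Bpt ρ ψ (η x) η' η' := by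
  have ha := hρ x
  have hb := hρ (δ x)
  have hc := hρ (η x)
  simp only [Bpt, hδ, hη, ge_iff_le]
  rw [logMean_symm (s := ρ (δ x)) (t := ρ x), logMean_symm (s := ρ (η x)) (t := ρ x)]
  have h1 := tangent ha hb hc
  have h2 := tangent ha hc hb
  rw [logMean_symm (s := ρ (η x)) (t := ρ x)] at h1
  rw [logMean_symm (s := ρ (δ x)) (t := ρ x)] at h2
  have hA := logMean_nonneg ha hb
  have hB := logMean_nonneg ha hc
  nlinarith [sq_nonneg (ψ (δ x) - ψ x + (ψ (η x) - ψ x)),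
    mul_nonneg (sq_nonneg (ψ (δ x) - ψ x + (ψ (η x) - ψ x))) (add_nonneg hA hB),
    mul_le_mul_of_nonneg_left h1 (by positivity : (0:ℝ) ≤ (1/2) * (ψ (δ x) - ψ x)^2),
    mul_le_mul_of_nonneg_left h2 (by positivity : (0:ℝ) ≤ (1/2) * (ψ (η x) - ψ x)^2)]
end
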